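/- For every natural number k, letting He_{2k+1} denote the (2k+1)-st probabilists' Hermite polynomial and z a standard normal random variable, E[(He_{2k+1}(z))³ · z] ≠ 0. -/

import Mathlib

open MeasureTheory ProbabilityTheory

/-- The `n`-th probabilists' Hermite polynomial as a function `ℝ → ℝ`. -/
noncomputable def He (n : ℕ) (z : ℝ) : ℝ := Polynomial.aeval z (Polynomial.hermite n)

namespace OddHermiteAux

open Polynomial Real Filter

/-- The probabilists' Hermite polynomial as a real polynomial. -/
noncomputable def Hr (n : ℕ) : ℝ[X] := (hermite n).map (algebraMap ℤ ℝ)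

lemma aeval_Hr (n : ℕ) (z : ℝ) : aeval z (Hr n) = aeval z (hermite n) :=
  aeval_map_algebraMap ℝ z (hermite n)

lemma Hr_zero : Hr 0 = 1 := by simp [Hr, hermite_zero]

lemma Hr_succ (n : ℕ) : Hr (n + 1) = X * Hr n - derivative (Hr n) := by
  simp [Hr, hermite_succ, Polynomial.derivative_map, Polynomial.map_mul, Polynomial.map_sub]

lemma derivative_hermite (n : ℕ) :
    derivative (Hr n) = (n : ℝ[X]) * Hr (n - 1) := by
  induction n with
  | zero => simp [Hr_zero]
  | succ n ih =>
    rw [Hr_succ, derivative_sub, derivative_mul, derivative_X, one_mul, ih,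
      Nat.add_sub_cancel]
    cases n with
    | zero => simp [Hr_zero]
    | succ m =>
      have key : X * Hr m - derivative (Hr m) = Hr (m + 1) :=
        (Hr_succ m).symm
      rw [Nat.add_sub_cancel, derivative_mul]
      simp only [Polynomial.derivative_natCast, zero_mul, zero_add]
      push_cast
      linear_combination ((m : ℝ[X]) + 1) * key

lemma integrable_poly_gauss (p : ℝ[X]) :
    Integrable (fun x : ℝ => aeval x p * Real.exp (-(x ^ 2 / 2))) := by
  induction p using Polynomial.induction_on' with
  | add p q hp hq =>
    refine (hp.add hq).congr (Filter.Eventually.of_forall fun x => ?_)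
    simp [add_mul]
  | monomial n a =>
    have h : Integrable (fun x : ℝ => x ^ (n : ℝ) * Real.exp (-(1/2 : ℝ) * x ^ 2)) :=
      integrable_rpow_mul_exp_neg_mul_sq (by norm_num)
        (by have : (0:ℝ) ≤ n := Nat.cast_nonneg n; linarith)
    have e1 : ∀ x : ℝ, -(1/2 : ℝ) * x ^ 2 = -(x ^ 2 / 2) := fun x => by ring
    simp_rw [Real.rpow_natCast, e1] at h
    have h3 := h.const_mul a
    refine h3.congr (Filter.Eventually.of_forall fun x => ?_)
    simp only [aeval_monomial, Algebra.algebraMap_self, RingHom.id_apply]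
    ring

lemma tendsto_poly_gauss_atTop (p : ℝ[X]) :
    Tendsto (fun x : ℝ => aeval x p * Real.exp (-(x ^ 2 / 2))) atTop (nhds 0) := by
  have h1 := p.tendsto_div_exp_atTop
  have h2 : Tendsto (fun x : ℝ => x - x ^ 2 / 2) atTop atBot := by
    refine tendsto_atBot_mono' atTop ?_ tendsto_neg_atTop_atBot
    filter_upwards [eventually_ge_atTop (4:ℝ)] with x hx
    nlinarith
  have h3 : Tendsto (fun x : ℝ => Real.exp (x - x ^ 2 / 2)) atTop (nhds 0) :=
    Real.tendsto_exp_atBot.comp h2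
  have h4 := h1.mul h3
  rw [zero_mul] at h4
  refine h4.congr fun x => ?_
  have he : Real.exp (x - x ^ 2 / 2) = Real.exp x * Real.exp (-(x ^ 2 / 2)) := by
    rw [← Real.exp_add]; ring_nf
  rw [he, coe_aeval_eq_eval]
  field_simp

lemma tendsto_poly_gauss_atBot (p : ℝ[X]) :
    Tendsto (fun x : ℝ => aeval x p * Real.exp (-(x ^ 2 / 2))) atBot (nhds 0) := by
  have h := (tendsto_poly_gauss_atTop (p.comp (-X))).comp tendsto_neg_atBot_atTop
  refine h.congr fun x => ?_
  simp [Function.comp, aeval_comp, neg_neg, neg_sq]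

lemma stein_vol (p : ℝ[X]) :
    ∫ x : ℝ, (x * aeval x p - aeval x (derivative p)) * Real.exp (-(x ^ 2 / 2)) = 0 := by
  have hderiv : ∀ x : ℝ, HasDerivAt (fun y : ℝ => aeval y p * Real.exp (-(y ^ 2 / 2)))
      (-((x * aeval x p - aeval x (derivative p)) * Real.exp (-(x ^ 2 / 2)))) x := by
    intro x
    have h1 : HasDerivAt (fun y : ℝ => aeval y p) (aeval x (derivative p)) x :=
      p.hasDerivAt_aeval x
    have h2 : HasDerivAt (fun y : ℝ => -(y ^ 2 / 2)) (-x) x := by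
      have := ((hasDerivAt_pow 2 x).div_const 2).neg
      exact this.congr_deriv (by norm_num)
    have h3 := h2.exp
    have h4 := h1.mul h3
    exact h4.congr_deriv (by ring)
  have hint : Integrable (fun x : ℝ =>
      -((x * aeval x p - aeval x (derivative p)) * Real.exp (-(x ^ 2 / 2)))) := by
    have h := integrable_poly_gauss (derivative p - X * p)
    refine h.congr (Filter.Eventually.of_forall fun x => ?_)
    simp only [map_sub, map_mul, aeval_X]
    ring
  have h0 := integral_of_hasDerivAt_of_tendsto hderiv hint
    (tendsto_poly_gauss_atBot p) (tendsto_poly_gauss_atTop p)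
  rw [integral_neg] at h0
  simp only [sub_zero] at h0
  linarith [h0]

lemma pdf_eq (x : ℝ) :
    gaussianPDFReal 0 1 x = (Real.sqrt (2 * π))⁻¹ * Real.exp (-(x ^ 2 / 2)) := by
  simp only [gaussianPDFReal, NNReal.coe_one, mul_one, sub_zero]
  rw [neg_div]

lemma gaussianPDF_toNNReal :
    gaussianPDF 0 1 = fun x => ((gaussianPDFReal 0 1 x).toNNReal : ENNReal) := rfl

lemma integral_gaussianReal_repr (f : ℝ → ℝ) :
    ∫ z, f z ∂(gaussianReal 0 1) = ∫ x, gaussianPDFReal 0 1 x * f x := by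
  rw [gaussianReal_of_var_ne_zero 0 one_ne_zero, gaussianPDF_toNNReal,
    integral_withDensity_eq_integral_smul
      ((measurable_gaussianPDFReal 0 1).real_toNNReal) f]
  refine integral_congr_ae (Filter.Eventually.of_forall fun x => ?_)
  simp only [NNReal.smul_def, smul_eq_mul]
  rw [Real.coe_toNNReal _ (gaussianPDFReal_nonneg 0 1 x)]

lemma integrable_aeval_gaussianReal (p : ℝ[X]) :
    Integrable (fun z => aeval z p) (gaussianReal 0 1) := by
  rw [gaussianReal_of_var_ne_zero 0 one_ne_zero, gaussianPDF_toNNReal,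
    integrable_withDensity_iff_integrable_smul
      ((measurable_gaussianPDFReal 0 1).real_toNNReal)]
  have h : Integrable (fun x : ℝ => (Real.sqrt (2 * π))⁻¹ * (aeval x p * Real.exp (-(x ^ 2 / 2)))) :=
    (integrable_poly_gauss p).const_mul _
  refine h.congr (Filter.Eventually.of_forall fun x => ?_)
  simp only [NNReal.smul_def, smul_eq_mul]
  rw [Real.coe_toNNReal _ (gaussianPDFReal_nonneg 0 1 x), pdf_eq]
  ring

lemma stein (p : ℝ[X]) :
    ∫ z, (z * aeval z p - aeval z (derivative p)) ∂(gaussianReal 0 1) = 0 := by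
  rw [integral_gaussianReal_repr]
  have h : (fun x : ℝ => gaussianPDFReal 0 1 x * (x * aeval x p - aeval x (derivative p)))
      = fun x => (Real.sqrt (2 * π))⁻¹ *
        ((x * aeval x p - aeval x (derivative p)) * Real.exp (-(x ^ 2 / 2))) := by
    funext x; rw [pdf_eq]; ring
  rw [h, integral_const_mul, stein_vol, mul_zero]

/-- The triple Hermite correlation. -/
noncomputable def T (a b c : ℕ) : ℝ :=
  ∫ z, aeval z (Hr a * Hr b * Hr c) ∂(gaussianReal 0 1)

lemma T_swap₁ (a b c : ℕ) : T a b c = T b a c := by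
  unfold T
  rw [show Hr a * Hr b * Hr c = Hr b * Hr a * Hr c by ring]

lemma T_swap₂ (a b c : ℕ) : T a b c = T a c b := by
  unfold T
  rw [show Hr a * Hr b * Hr c = Hr a * Hr c * Hr b by ring]

lemma T_rot (a b c : ℕ) : T a b c = T b c a := by
  rw [T_swap₁, T_swap₂]

lemma T_zero : T 0 0 0 = 1 := by
  unfold T
  simp [Hr_zero, measure_univ]

lemma T_rec (a b c : ℕ) :
    T (a + 1) b c = b * T a (b - 1) c + c * T a b (c - 1) := by
  set P := Hr a * Hr b * Hr c with hP
  have polyid : Hr (a + 1) * Hr b * Hr c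
      = (X * P - derivative P)
        + ((b : ℝ[X]) * (Hr a * Hr (b - 1) * Hr c)
          + (c : ℝ[X]) * (Hr a * Hr b * Hr (c - 1))) := by
    rw [hP, Hr_succ, derivative_mul, derivative_mul,
      derivative_hermite a, derivative_hermite b, derivative_hermite c]
    ring
  have i1 : Integrable (fun z : ℝ => z * aeval z P - aeval z (derivative P))
      (gaussianReal 0 1) := by
    refine (integrable_aeval_gaussianReal (X * P - derivative P)).congr
      (Filter.Eventually.of_forall fun z => ?_)
    simp [map_sub, map_mul, aeval_X]
  have i2 : Integrable (fun z : ℝ =>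
      (b : ℝ) * aeval z (Hr a * Hr (b - 1) * Hr c)) (gaussianReal 0 1) :=
    (integrable_aeval_gaussianReal _).const_mul _
  have i3 : Integrable (fun z : ℝ =>
      (c : ℝ) * aeval z (Hr a * Hr b * Hr (c - 1))) (gaussianReal 0 1) :=
    (integrable_aeval_gaussianReal _).const_mul _
  have expand : T (a + 1) b c
      = ∫ z, ((z * aeval z P - aeval z (derivative P))
          + ((b : ℝ) * aeval z (Hr a * Hr (b - 1) * Hr c)
            + (c : ℝ) * aeval z (Hr a * Hr b * Hr (c - 1))))
          ∂(gaussianReal 0 1) := by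
    unfold T
    refine integral_congr_ae (Filter.Eventually.of_forall fun z => ?_)
    rw [polyid]
    simp [map_add, map_sub, map_mul, aeval_X]
  have i23 : Integrable (fun z : ℝ =>
      (b : ℝ) * aeval z (Hr a * Hr (b - 1) * Hr c)
        + (c : ℝ) * aeval z (Hr a * Hr b * Hr (c - 1))) (gaussianReal 0 1) := i2.add i3
  rw [expand, integral_add i1 i23, integral_add i2 i3, stein P,
    integral_const_mul, integral_const_mul, zero_add]
  rfl

lemma T_nonneg_aux : ∀ s a b c : ℕ, a + b + c = s → 0 ≤ T a b c := by
  intro s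
  induction s using Nat.strong_induction_on with
  | _ s ih =>
    intro a b c hs
    match a, b, c with
    | 0, 0, 0 => rw [T_zero]; norm_num
    | a + 1, b, c =>
      rw [T_rec]
      have h1 := ih (a + (b - 1) + c) (by omega) a (b - 1) c rfl
      have h2 := ih (a + b + (c - 1)) (by omega) a b (c - 1) rfl
      exact add_nonneg (mul_nonneg (Nat.cast_nonneg b) h1)
        (mul_nonneg (Nat.cast_nonneg c) h2)
    | 0, b + 1, c =>
      rw [T_swap₁, T_rec]
      have h2 := ih (b + 0 + (c - 1)) (by omega) b 0 (c - 1) rfl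
      simp only [Nat.cast_zero, zero_mul, zero_add]
      exact mul_nonneg (Nat.cast_nonneg c) h2
    | 0, 0, c + 1 =>
      rw [T_rot, T_rot, T_rec]
      simp

lemma T_nonneg (a b c : ℕ) : 0 ≤ T a b c := T_nonneg_aux _ a b c rfl

lemma T_pos (k : ℕ) : 0 < T (2 * k + 1) (2 * k + 1) (2 * k) := by
  induction k with
  | zero =>
    have h := T_rec 0 1 0
    norm_num [T_zero] at h
    norm_num [h]
  | succ k ih =>
    have E1 := T_rec (2 * k + 2) (2 * k + 3) (2 * k + 2)
    have E2 := T_rec (2 * k + 1) (2 * k + 2) (2 * k + 2)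
    have E3 := T_rec (2 * k) (2 * k + 1) (2 * k + 2)
    rw [show 2 * k + 2 + 1 = 2 * k + 3 from by omega,
      show 2 * k + 3 - 1 = 2 * k + 2 from by omega,
      show 2 * k + 2 - 1 = 2 * k + 1 from by omega] at E1
    rw [show 2 * k + 1 + 1 = 2 * k + 2 from by omega,
      show 2 * k + 2 - 1 = 2 * k + 1 from by omega] at E2
    rw [show 2 * k + 1 - 1 = 2 * k from by omega,
      show 2 * k + 2 - 1 = 2 * k + 1 from by omega] at E3
    have e4 : T (2 * k) (2 * k + 1) (2 * k + 1) = T (2 * k + 1) (2 * k + 1) (2 * k) := by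
      rw [T_rot]
    have n1 : 0 ≤ T (2 * k) (2 * k) (2 * k + 2) := T_nonneg _ _ _
    have n2 : 0 ≤ T (2 * k + 1) (2 * k + 2) (2 * k + 1) := T_nonneg _ _ _
    have n3 : 0 ≤ T (2 * k + 2) (2 * k + 3) (2 * k + 1) := T_nonneg _ _ _
    have c1 : (0:ℝ) < ((2 * k + 2 : ℕ) : ℝ) := by positivity
    have c2 : (0:ℝ) < ((2 * k + 3 : ℕ) : ℝ) := by positivity
    have p3 : 0 < T (2 * k + 1) (2 * k + 1) (2 * k + 2) := by
      rw [E3, e4]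
      exact add_pos_of_nonneg_of_pos (mul_nonneg (Nat.cast_nonneg _) n1) (mul_pos c1 ih)
    have p2 : 0 < T (2 * k + 2) (2 * k + 2) (2 * k + 2) := by
      rw [E2]
      exact add_pos_of_pos_of_nonneg (mul_pos c1 p3) (mul_nonneg (Nat.cast_nonneg _) n2)
    have p1 : 0 < T (2 * k + 3) (2 * k + 3) (2 * k + 2) := by
      rw [E1]
      exact add_pos_of_pos_of_nonneg (mul_pos c2 p2) (mul_nonneg (Nat.cast_nonneg _) n3)
    rw [show 2 * (k + 1) + 1 = 2 * k + 3 from by omega,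
      show 2 * (k + 1) = 2 * k + 2 from by omega]
    exact p1

end OddHermiteAux

/-- For every `k`, `E[(He_{2k+1}(z))³ · z] ≠ 0` where `z ∼ N(0,1)`. -/
theorem odd_hermite_cube_correlation_ne_zero (k : ℕ) :
    ∫ z, (He (2 * k + 1) z) ^ 3 * z ∂(gaussianReal 0 1) ≠ 0 := by
  open Polynomial OddHermiteAux in
  set q := Hr (2 * k + 1) ^ 3 with hq
  have hDq : derivative q
      = ((3 * (2 * k + 1) : ℕ) : ℝ[X])
        * (Hr (2 * k) * Hr (2 * k + 1) * Hr (2 * k + 1)) := by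
    rw [hq, derivative_pow, derivative_hermite, Nat.add_sub_cancel]
    simp only [Polynomial.C_eq_natCast]
    push_cast
    ring
  have i1 : Integrable (fun z : ℝ => z * aeval z q - aeval z (derivative q))
      (gaussianReal 0 1) := by
    refine (integrable_aeval_gaussianReal (X * q - derivative q)).congr
      (Filter.Eventually.of_forall fun z => ?_)
    simp [map_sub, map_mul, aeval_X]
  have i2 : Integrable (fun z : ℝ => aeval z (derivative q)) (gaussianReal 0 1) :=
    integrable_aeval_gaussianReal _
  have expand : ∫ z, (He (2 * k + 1) z) ^ 3 * z ∂(gaussianReal 0 1)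
      = ∫ z, ((z * aeval z q - aeval z (derivative q)) + aeval z (derivative q))
          ∂(gaussianReal 0 1) := by
    refine integral_congr_ae (Filter.Eventually.of_forall fun z => ?_)
    simp only [He, hq, map_pow, aeval_Hr]
    ring
  have key : ∫ z, (He (2 * k + 1) z) ^ 3 * z ∂(gaussianReal 0 1)
      = ((3 * (2 * k + 1) : ℕ) : ℝ) * T (2 * k) (2 * k + 1) (2 * k + 1) := by
    rw [expand, integral_add i1 i2, stein q, zero_add]
    unfold T
    simp_rw [hDq, map_mul, map_natCast]
    rw [integral_const_mul]
  rw [key]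
  have hpos : 0 < T (2 * k) (2 * k + 1) (2 * k + 1) := by
    rw [T_rot]
    exact T_pos k
  have hc : (0:ℝ) < ((3 * (2 * k + 1) : ℕ) : ℝ) := by positivity
  exact ne_of_gt (mul_pos hc hpos)
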